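/- arXiv:math/0703897 — 4 statements merged into one kernel-verified Lean document; each statement's English description precedes it below -/
import Mathlib

section
/- Let γ > 0 and let g : ℝ → ℝ be a bounded continuous function. If f : ℝ → ℝ is a bounded, twice continuously differentiable function satisfying f''(x) - γ f'(x) = -g(x) for all x ∈ ℝ, then its derivative is bounded, with sup-norm bound ‖f'‖ ≤ ‖g‖ / γ, where ‖·‖ denotes the supremum norm over ℝ. -/
open Filter Set

lemma aux_key (γ : ℝ) (hγ : 0 < γ) (M : ℝ) (hM : 0 ≤ M) (f : ℝ → ℝ)
    (hf : ContDiff ℝ 2 f) (C : ℝ) (hC : ∀ x, |f x| ≤ C)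
    (hode : ∀ x, γ * deriv f x - M ≤ deriv (deriv f) x) :
    ∀ x, deriv f x ≤ M / γ := by
  have hdf : ContDiff ℝ 1 (deriv f) := by
    have h2 : (2 : WithTop ℕ∞) = 1 + 1 := by norm_num
    rw [h2, contDiff_succ_iff_deriv] at hf
    exact hf.2.2
  have hdf1 : Differentiable ℝ (deriv f) := hdf.differentiable one_ne_zero
  have hddf : Differentiable ℝ f := by
    have h2 : (2 : WithTop ℕ∞) = 1 + 1 := by norm_num
    rw [h2, contDiff_succ_iff_deriv] at hf
    exact hf.1
  intro x₀
  by_contra hlt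
  push_neg at hlt
  set c := deriv f x₀ - M / γ with hc
  have hc0 : 0 < c := sub_pos.mpr hlt
  -- the auxiliary monotone function
  set h : ℝ → ℝ := fun x => (deriv f x - M / γ) * Real.exp (-(γ * x)) with hh
  have hder : ∀ x, HasDerivAt h
      ((deriv (deriv f) x) * Real.exp (-(γ * x))
        + (deriv f x - M / γ) * (Real.exp (-(γ * x)) * (-γ))) x := by
    intro x
    have h1 : HasDerivAt (fun x => deriv f x - M / γ) (deriv (deriv f) x) x :=
      ((hdf1 x).hasDerivAt).sub_const _
    have h2 : HasDerivAt (fun x => Real.exp (-(γ * x))) (Real.exp (-(γ * x)) * (-γ)) x := by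
      have := ((hasDerivAt_id x).const_mul γ).neg.exp
      simpa [mul_comm] using this
    exact h1.mul h2
  have hmono : Monotone h := by
    apply monotone_of_deriv_nonneg
    · intro x; exact (hder x).differentiableAt
    · intro x
      rw [(hder x).deriv]
      have hexp : 0 < Real.exp (-(γ * x)) := Real.exp_pos _
      have := hode x
      have key : 0 ≤ deriv (deriv f) x - γ * (deriv f x - M / γ) := by
        have : γ * (M / γ) = M := by field_simp
        nlinarith [hode x]
      nlinarith
  -- hence deriv f x ≥ c for all x ≥ x₀
  have hge : ∀ x ≥ x₀, c ≤ deriv f x := by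
    intro x hx
    have h1 : h x₀ ≤ h x := hmono hx
    have hee : Real.exp (-(γ * x)) ≤ Real.exp (-(γ * x₀)) := by
      apply Real.exp_le_exp.mpr
      nlinarith
    have hex : 0 < Real.exp (-(γ * x)) := Real.exp_pos _
    have hex0 : 0 < Real.exp (-(γ * x₀)) := Real.exp_pos _
    have h2 : c * Real.exp (-(γ * x)) ≤ c * Real.exp (-(γ * x₀)) := by
      exact mul_le_mul_of_nonneg_left hee hc0.le
    have h3 : c * Real.exp (-(γ * x)) ≤ (deriv f x - M / γ) * Real.exp (-(γ * x)) := by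
      calc c * Real.exp (-(γ * x)) ≤ c * Real.exp (-(γ * x₀)) := h2
        _ = h x₀ := by simp [hh, hc]
        _ ≤ h x := h1
    have h4 : c ≤ deriv f x - M / γ := le_of_mul_le_mul_right (by simpa [mul_comm] using h3) hex
    have h5 : (0:ℝ) ≤ M / γ := div_nonneg hM hγ.le
    clear_value c
    clear hder hmono h1 h2 h3 hee hex hex0
    linarith
  -- now f grows at least linearly, contradiction
  clear_value c
  clear hder hmono hh h
  have hC0 : 0 ≤ C := (abs_nonneg _).trans (hC x₀)
  have hyc : 0 < (2 * C + 1) / c := div_pos (by linarith) hc0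
  have hxy : x₀ ≤ x₀ + (2 * C + 1) / c := by linarith
  have hgrow : c * ((x₀ + (2 * C + 1) / c) - x₀) ≤ f (x₀ + (2 * C + 1) / c) - f x₀ :=
    (convex_Ici x₀).mul_sub_le_image_sub_of_le_deriv
      hddf.continuous.continuousOn hddf.differentiableOn
      (fun z hz => hge z (le_of_lt (by simpa [interior_Ici] using hz)))
      x₀ self_mem_Ici _ hxy hxy
  have e1 : c * ((x₀ + (2 * C + 1) / c) - x₀) = 2 * C + 1 := by
    field_simp
    ring
  have b1 := abs_le.mp (hC (x₀ + (2 * C + 1) / c))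
  have b2 := abs_le.mp (hC x₀)
  linarith

theorem stmt_0 (γ : ℝ) (hγ : 0 < γ) (g f : ℝ → ℝ)
    (hg_cont : Continuous g) (hg_bdd : ∃ C, ∀ x, |g x| ≤ C)
    (hf_smooth : ContDiff ℝ 2 f) (hf_bdd : ∃ C, ∀ x, |f x| ≤ C)
    (hode : ∀ x, deriv (deriv f) x - γ * deriv f x = -g x) :
    ∀ x, |deriv f x| ≤ (⨆ u, |g u|) / γ := by
  obtain ⟨C, hCg⟩ := hg_bdd
  have hbdd : BddAbove (Set.range fun u => |g u|) := ⟨C, by rintro _ ⟨u, rfl⟩; exact hCg u⟩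
  set M := ⨆ u, |g u| with hMdef
  have hMle : ∀ x, |g x| ≤ M := fun x => le_ciSup hbdd x
  have hM0 : 0 ≤ M := (abs_nonneg _).trans (hMle 0)
  obtain ⟨Cf, hCf⟩ := hf_bdd
  intro x
  have h1 : deriv f x ≤ M / γ := by
    refine aux_key γ hγ M hM0 f hf_smooth Cf hCf (fun y => ?_) x
    have h := hode y
    have h2 := abs_le.mp (hMle y)
    linarith
  have hneg : deriv (fun x => -f x) = fun x => -deriv f x := by
    funext z
    exact deriv.neg
  have h2 : -deriv f x ≤ M / γ := by
    have := aux_key γ hγ M hM0 (fun x => -f x) hf_smooth.neg Cf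
      (fun z => by simpa using hCf z) (fun y => ?_) x
    · rw [hneg] at this; simpa using this
    · rw [hneg]
      have hdd : deriv (fun z => -deriv f z) y = -deriv (deriv f) y := deriv.neg
      rw [hdd]
      show γ * (-(deriv f y)) - M ≤ -(deriv (deriv f) y)
      have h := hode y
      have h2 := abs_le.mp (hMle y)
      linarith
  exact abs_le.mpr ⟨by linarith, h1⟩
end

section
/- Let (A_n)_{n≥1} be events such that almost surely infinitely many A_n occur, and let (B_n)_{n≥1} be mutually independent events, independent of the σ-algebra generated by (A_n)_{n≥1}, with P(B_n) ≥ c > 0 for all n. Then almost surely infinitely many of the events A_n ∩ B_n occur. -/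
open Filter Set MeasureTheory ProbabilityTheory

theorem stmt_10 {Ω : Type*} [MeasureSpace Ω] [IsProbabilityMeasure (ℙ : Measure Ω)]
    (A B : ℕ → Set Ω) (c : ENNReal) (hc : 0 < c)
    (hA_meas : ∀ n, MeasurableSet (A n)) (hB_meas : ∀ n, MeasurableSet (B n))
    (hA_io : ℙ (Filter.limsup A Filter.atTop) = 1)
    (hindep : iIndep
      (fun i : Option ℕ =>
        Option.elim i (MeasurableSpace.generateFrom (Set.range A))
          (fun n => MeasurableSpace.generateFrom {B n})) ℙ)
    (hBc : ∀ n, c ≤ ℙ (B n)) :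
    ℙ (Filter.limsup (fun n => A n ∩ B n) Filter.atTop) = 1 := by
  classical
  set m : Option ℕ → MeasurableSpace Ω := fun i =>
    Option.elim i (MeasurableSpace.generateFrom (Set.range A))
      (fun n => MeasurableSpace.generateFrom {B n}) with hm
  have h_le : ∀ i, m i ≤ (inferInstance : MeasurableSpace Ω) := by
    rintro (_ | n)
    · exact MeasurableSpace.generateFrom_le (by rintro _ ⟨n, rfl⟩; exact hA_meas n)
    · exact MeasurableSpace.generateFrom_le (by rintro s rfl; exact hB_meas n)
  have hAmem : ∀ n, MeasurableSet[m none] (A n) := fun n =>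
    MeasurableSpace.measurableSet_generateFrom ⟨n, rfl⟩
  have hBmem : ∀ n, MeasurableSet[m (some n)] (B n) := fun n =>
    MeasurableSpace.measurableSet_generateFrom rfl
  set E : Set Ω := Filter.limsup (fun n => A n ∩ B n) Filter.atTop with hE
  set L : Set Ω := Filter.limsup A Filter.atTop with hL
  set G : ℕ → Set Ω := fun N => ⋂ k, ⋂ (_ : N ≤ k), (A k ∩ B k)ᶜ with hG
  have hGmono : ∀ {N M : ℕ}, N ≤ M → G N ⊆ G M := by
    intro N M hNM ω hω
    simp only [hG, mem_iInter] at hω ⊢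
    exact fun k hk => hω k (hNM.trans hk)
  have hEc : Eᶜ = ⋃ N, G N := by
    ext ω
    simp only [hE, hG, mem_compl_iff, mem_limsup_iff_frequently_mem,
      Filter.not_frequently, eventually_atTop, mem_iUnion, mem_iInter, mem_compl_iff]
  have hGm : ∀ N, MeasurableSet (G N) := fun N =>
    MeasurableSet.iInter fun k => MeasurableSet.iInter fun _ =>
      ((hA_meas k).inter (hB_meas k)).compl
  have hLm : MeasurableSet L := MeasurableSet.measurableSet_limsup hA_meas
  have hEm : MeasurableSet E := MeasurableSet.measurableSet_limsup fun n => (hA_meas n).inter (hB_meas n)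
  -- the first-occurrence sets
  set W : ℕ → ℕ → Set Ω := fun N j => A (N + j) ∩ ⋂ k, ⋂ (_ : k < j), (A (N + k))ᶜ with hW
  set T : ℕ → ℕ → Set Ω := fun N j => W N j ∩ L ∩ G (N + j + 1) with hT
  have hWm : ∀ N j, MeasurableSet (W N j) := fun N j =>
    (hA_meas _).inter (MeasurableSet.iInter fun k => MeasurableSet.iInter fun _ =>
      (hA_meas _).compl)
  have hTm : ∀ N j, MeasurableSet (T N j) := fun N j =>
    ((hWm N j).inter hLm).inter (hGm _)
  -- measurability of pieces with respect to the generated σ-algebras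
  have hLmem : MeasurableSet[m none] L := by
    have := @MeasurableSet.measurableSet_limsup Ω (m none) A hAmem
    exact this
  -- independence of B (N+j) from the rest
  have hTdisj' : ∀ N i j, i < j → Disjoint (T N i) (T N j) := by
    intro N i j h
    refine Set.disjoint_left.2 fun ω hωi hωj => ?_
    have h1 : ω ∈ A (N + i) := hωi.1.1.1
    have h2 : ω ∉ A (N + i) := by
      have := hωj.1.1.2
      simp only [mem_iInter, mem_compl_iff] at this
      exact this i h
    exact h2 h1
  have hTdisj : ∀ N, Pairwise (Function.onFun Disjoint (T N)) := by
    intro N i j hij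
    rcases hij.lt_or_gt with h | h
    · exact hTdisj' N i j h
    · exact (hTdisj' N j i h).symm
  have hstep : ∀ N j, ℙ ((B (N + j))ᶜ ∩ T N j) ≤ (1 - c) * ℙ (T N j) := by
    intro N j
    set S : MeasurableSpace Ω := ⨆ i ∈ ({some (N + j)}ᶜ : Set (Option ℕ)), m i with hS
    have hnone : m none ≤ S := le_biSup m (by simp)
    have hsome : ∀ k : ℕ, k ≠ N + j → m (some k) ≤ S := fun k hk =>
      le_biSup m (by simp [hk])
    have hindep2 : Indep (m (some (N + j))) S ℙ := by
      have h := indep_biSup_compl h_le hindep {some (N + j)}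
      exact indep_of_indep_of_le_left h (le_biSup m (mem_singleton _))
    have hTS : MeasurableSet[S] (T N j) := by
      refine MeasurableSet.inter (MeasurableSet.inter ?_ (hnone _ hLmem)) ?_
      · exact MeasurableSet.inter (hnone _ (hAmem _))
          (MeasurableSet.iInter fun k => MeasurableSet.iInter fun _ =>
            (hnone _ (hAmem _)).compl)
      · refine MeasurableSet.iInter fun k => MeasurableSet.iInter fun hk => ?_
        exact ((hnone _ (hAmem k)).inter
          (hsome k (by omega) _ (hBmem k))).compl
    have heq : ℙ ((B (N + j))ᶜ ∩ T N j) = ℙ ((B (N + j))ᶜ) * ℙ (T N j) :=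
      (Indep_iff _ _ _).1 hindep2 _ _ (hBmem (N + j)).compl hTS
    rw [heq]
    refine mul_le_mul_left ?_ _
    rw [prob_compl_eq_one_sub (hB_meas _)]
    exact tsub_le_tsub_left (hBc _) 1
  have hcover : ∀ N, L ∩ G N ⊆ ⋃ j, ((B (N + j))ᶜ ∩ T N j) := by
    intro N ω hω
    obtain ⟨hωL, hωG⟩ := hω
    have hfreq : ∃ᶠ n in atTop, ω ∈ A n := mem_limsup_iff_frequently_mem.1 hωL
    have hex : ∃ j, ω ∈ A (N + j) := by
      obtain ⟨k, hk, hωk⟩ := (frequently_atTop.1 hfreq) N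
      exact ⟨k - N, by rwa [Nat.add_sub_cancel' hk]⟩
    set j := Nat.find hex with hj
    have hωA : ω ∈ A (N + j) := Nat.find_spec hex
    have hωW : ω ∈ W N j := by
      refine ⟨hωA, ?_⟩
      simp only [mem_iInter, mem_compl_iff]
      exact fun k hk => Nat.find_min hex hk
    have hωB : ω ∉ B (N + j) := by
      intro hωB
      have := hωG
      simp only [hG, mem_iInter, mem_compl_iff] at this
      exact this (N + j) (Nat.le_add_right N j) ⟨hωA, hωB⟩
    exact mem_iUnion.2 ⟨j, hωB, ⟨hωW, hωL⟩, hGmono (by omega) hωG⟩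
  -- main estimate
  set a : ENNReal := ℙ (L ∩ Eᶜ) with ha
  have hTsub : ∀ N j, T N j ⊆ L ∩ Eᶜ := by
    intro N j ω hω
    exact ⟨hω.1.2, hEc ▸ mem_iUnion.2 ⟨N + j + 1, hω.2⟩⟩
  have key : ∀ N, ℙ (L ∩ G N) ≤ (1 - c) * a := by
    intro N
    calc ℙ (L ∩ G N) ≤ ℙ (⋃ j, ((B (N + j))ᶜ ∩ T N j)) := measure_mono (hcover N)
      _ ≤ ∑' j, ℙ ((B (N + j))ᶜ ∩ T N j) := measure_iUnion_le _
      _ ≤ ∑' j, (1 - c) * ℙ (T N j) := ENNReal.tsum_le_tsum fun j => hstep N j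
      _ = (1 - c) * ∑' j, ℙ (T N j) := ENNReal.tsum_mul_left
      _ = (1 - c) * ℙ (⋃ j, T N j) := by
          rw [measure_iUnion (hTdisj N) (hTm N)]
      _ ≤ (1 - c) * a := by
          refine mul_le_mul_right (measure_mono ?_) _
          exact iUnion_subset fun j => hTsub N j
  have haeq : a ≤ (1 - c) * a := by
    have h1 : L ∩ Eᶜ = ⋃ N, (L ∩ G N) := by rw [hEc, inter_iUnion]
    have h2 : Directed (· ⊆ ·) (fun N => L ∩ G N) := by
      intro N M
      exact ⟨max N M, inter_subset_inter_right _ (hGmono (le_max_left _ _)),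
        inter_subset_inter_right _ (hGmono (le_max_right _ _))⟩
    calc a = ⨆ N, ℙ (L ∩ G N) := by rw [ha, h1, Directed.measure_iUnion h2]
      _ ≤ (1 - c) * a := iSup_le key
  have ha0 : a = 0 := by
    by_contra h
    have hane : a ≠ ⊤ := (lt_of_le_of_lt (measure_mono (inter_subset_left)) 
      (lt_of_le_of_lt prob_le_one (by norm_num))).ne
    have h1c : (1 : ENNReal) - c < 1 := ENNReal.sub_lt_self ENNReal.one_ne_top one_ne_zero hc.ne'
    have : (1 - c) * a < 1 * a := by
      have h' := ENNReal.mul_lt_mul_right h hane h1c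
      rwa [mul_comm a, mul_comm a] at h'
    rw [one_mul] at this
    exact absurd haeq (not_le.2 this)
  have hLc : ℙ Lᶜ = 0 := by
    rw [prob_compl_eq_one_sub hLm, hA_io, tsub_self]
  have hEcz : ℙ Eᶜ = 0 := by
    have hsub : Eᶜ ⊆ Lᶜ ∪ (L ∩ Eᶜ) := by
      intro ω hω
      by_cases hωL : ω ∈ L
      · exact Or.inr ⟨hωL, hω⟩
      · exact Or.inl hωL
    refine le_antisymm ?_ zero_le
    calc ℙ Eᶜ ≤ ℙ (Lᶜ ∪ (L ∩ Eᶜ)) := measure_mono hsub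
      _ ≤ ℙ Lᶜ + ℙ (L ∩ Eᶜ) := measure_union_le _ _
      _ = 0 := by rw [hLc, ← ha, ha0, add_zero]
  exact (prob_compl_eq_zero_iff hEm).1 hEcz
end

section
/- Let (ξ_n)_{n≥1} be i.i.d. integrable real random variables with E[ξ_1] ≤ 0 and P(ξ_1 ≠ 0) > 0, and let S_n = ξ_1 + ⋯ + ξ_n. Then liminf_{n→∞} S_n = -∞ almost surely. -/
set_option linter.unusedSectionVars false
set_option linter.unusedVariables false
set_option maxHeartbeats 1000000

open Filter Set MeasureTheory ProbabilityTheory Topology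

namespace Stmt12Aux

variable {Ω : Type*} [MeasureSpace Ω] [IsProbabilityMeasure (ℙ : Measure Ω)]

/-- partial sums -/
def Swalk (ξ : ℕ → Ω → ℝ) (n : ℕ) (ω : Ω) : ℝ := ∑ i ∈ Finset.range n, ξ i ω

def padf (n : ℕ) (x : Fin n → ℝ) (i : ℕ) : ℝ := if h : i < n then x ⟨i, h⟩ else 0

def Aset (n : ℕ) (t : ℝ) : Set (Fin n → ℝ) :=
  {x | ∀ j ≤ n, -t ≤ ∑ i ∈ Finset.range j, padf n x i}

def Eset (ξ : ℕ → Ω → ℝ) (n : ℕ) (t : ℝ) : Set Ω := {ω | ∀ j ≤ n, -t ≤ Swalk ξ j ω}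

def Cset (ξ : ℕ → Ω → ℝ) (t : ℝ) : Set Ω := {ω | ∀ j, -t ≤ Swalk ξ j ω}

def Phin (ξ : ℕ → Ω → ℝ) (n : ℕ) (t : ℝ) : ℝ := (ℙ (Eset ξ n t)).toReal
def Phi (ξ : ℕ → Ω → ℝ) (t : ℝ) : ℝ := (ℙ (Cset ξ t)).toReal
def Bset (ξ : ℕ → Ω → ℝ) : Set Ω := ⋃ m : ℕ, Cset ξ (m : ℝ)

lemma measurable_Swalk (ξ : ℕ → Ω → ℝ) (hmeas : ∀ n, Measurable (ξ n)) (n : ℕ) :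
    Measurable (Swalk ξ n) := by
  unfold Swalk
  exact Finset.measurable_sum _ fun i _ => hmeas i

lemma measurableSet_Aset (n : ℕ) (t : ℝ) : MeasurableSet (Aset n t) := by
  have hA : Aset n t = ⋂ j ∈ Set.Iic n, {x : Fin n → ℝ | -t ≤ ∑ i ∈ Finset.range j, padf n x i} := by
    ext x; simp [Aset, Set.mem_Iic]
  rw [hA]
  refine MeasurableSet.biInter (to_countable _) fun j _ => ?_
  have : Measurable fun x : Fin n → ℝ => ∑ i ∈ Finset.range j, padf n x i := by
    refine Finset.measurable_sum _ fun i _ => ?_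
    unfold padf
    split
    · exact measurable_pi_apply _
    · exact measurable_const
  exact measurableSet_le measurable_const this

lemma measurableSet_Eset (ξ : ℕ → Ω → ℝ) (hmeas : ∀ n, Measurable (ξ n)) (n : ℕ) (t : ℝ) :
    MeasurableSet (Eset ξ n t) := by
  have : Eset ξ n t = ⋂ j ∈ Set.Iic n, {ω | -t ≤ Swalk ξ j ω} := by
    ext ω; simp [Eset, Set.mem_Iic]
  rw [this]
  exact MeasurableSet.biInter (to_countable _) fun j _ =>
    measurableSet_le measurable_const (measurable_Swalk ξ hmeas j)

lemma measurableSet_Cset (ξ : ℕ → Ω → ℝ) (hmeas : ∀ n, Measurable (ξ n)) (t : ℝ) :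
    MeasurableSet (Cset ξ t) := by
  have : Cset ξ t = ⋂ j, {ω | -t ≤ Swalk ξ j ω} := by
    ext ω; simp [Cset, Set.mem_iInter]
  rw [this]
  exact MeasurableSet.iInter fun j =>
    measurableSet_le measurable_const (measurable_Swalk ξ hmeas j)

/-- K1: joint law of a shifted block is the product of the common marginal. -/
lemma map_block_eq_pi (ξ : ℕ → Ω → ℝ) (hmeas : ∀ n, Measurable (ξ n))
    (hindep : iIndepFun ξ ℙ)
    (hident : ∀ n, Measure.map (ξ n) ℙ = Measure.map (ξ 0) ℙ) (m n : ℕ) :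
    Measure.map (fun ω (i : Fin n) => ξ (m + i) ω) ℙ
      = Measure.pi (fun _ : Fin n => Measure.map (ξ 0) ℙ) := by
  have hμ : ∀ k (s : Set ℝ), MeasurableSet s → ℙ (ξ k ⁻¹' s) = Measure.map (ξ 0) ℙ s := by
    intro k s hs
    rw [← hident k, Measure.map_apply (hmeas k) hs]
  refine Eq.symm (Measure.pi_eq fun s hs => ?_)
  rw [Measure.map_apply (measurable_pi_lambda _ fun i => hmeas _) (MeasurableSet.univ_pi hs)]
  have hpre : (fun ω (i : Fin n) => ξ (m + i) ω) ⁻¹' (Set.pi univ s)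
      = ⋂ i : Fin n, ξ (m + (i : ℕ)) ⁻¹' s i := by
    ext ω; simp [Set.mem_pi]
  rw [hpre]
  -- sets indexed by ℕ
  set sets : ℕ → Set ℝ := fun k => if h : k - m < n ∧ m ≤ k then s ⟨k - m, h.1⟩ else univ with hsets
  have hsets_meas : ∀ k, MeasurableSet (sets k) := by
    intro k
    rw [hsets]
    beta_reduce
    split
    · exact hs _
    · exact MeasurableSet.univ
  have hsets_app : ∀ i : Fin n, sets (m + (i : ℕ)) = s i := by
    intro i
    rw [hsets]
    beta_reduce
    rw [dif_pos (⟨by omega, by omega⟩ : m + (i : ℕ) - m < n ∧ m ≤ m + (i : ℕ))]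
    exact congrArg s (Fin.ext (by simp only [Fin.val_mk]; omega))
  have hS : (⋂ i : Fin n, ξ (m + (i : ℕ)) ⁻¹' s i)
      = ⋂ k ∈ Finset.image (fun i : Fin n => m + (i : ℕ)) Finset.univ, ξ k ⁻¹' sets k := by
    ext ω
    simp only [Set.mem_iInter, Finset.mem_image, Finset.mem_univ, true_and]
    constructor
    · rintro h k ⟨i, rfl⟩
      rw [hsets_app i]; exact h i
    · intro h i
      have := h (m + (i : ℕ)) ⟨i, rfl⟩
      rwa [hsets_app i] at this
  rw [hS, hindep.measure_inter_preimage_eq_mul _ (fun k _ => hsets_meas k)]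
  have hinj : Function.Injective (fun i : Fin n => m + (i : ℕ)) := by
    intro a b hab
    simp only at hab
    exact Fin.ext (by omega)
  rw [Finset.prod_image (fun a _ b _ h => hinj h)]
  refine Finset.prod_congr rfl fun i _ => ?_
  rw [hsets_app i, hμ _ _ (hs i)]

/-- bridge: probability of Eset equals product measure of Aset -/
lemma prob_Eset_eq (ξ : ℕ → Ω → ℝ) (hmeas : ∀ n, Measurable (ξ n))
    (hindep : iIndepFun ξ ℙ)
    (hident : ∀ n, Measure.map (ξ n) ℙ = Measure.map (ξ 0) ℙ) (n : ℕ) (t : ℝ) :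
    ℙ (Eset ξ n t) = Measure.pi (fun _ : Fin n => Measure.map (ξ 0) ℙ) (Aset n t) := by
  have hpre : Eset ξ n t = (fun ω (i : Fin n) => ξ (0 + (i : ℕ)) ω) ⁻¹' (Aset n t) := by
    ext ω
    simp only [Eset, Aset, Set.mem_setOf_eq, Set.mem_preimage]
    refine forall_congr' fun j => imp_congr_right fun hj => ?_
    have : ∑ i ∈ Finset.range j, padf n (fun i : Fin n => ξ (0 + (i : ℕ)) ω) i
        = Swalk ξ j ω := by
      refine Finset.sum_congr rfl fun i hi => ?_
      have hin : i < n := lt_of_lt_of_le (Finset.mem_range.mp hi) hj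
      simp [padf, hin]
    rw [this]
  rw [hpre, ← map_block_eq_pi ξ hmeas hindep hident 0 n,
    Measure.map_apply (measurable_pi_lambda _ fun i => hmeas _) (measurableSet_Aset n t)]

lemma indep_pair (ξ : ℕ → Ω → ℝ) (hmeas : ∀ n, Measurable (ξ n))
    (hindep : iIndepFun ξ ℙ) (n : ℕ) :
    IndepFun (ξ 0) (fun ω (i : Fin n) => ξ (1 + (i : ℕ)) ω) ℙ := by
  classical
  set T : Finset ℕ := Finset.image (fun i : Fin n => 1 + (i : ℕ)) Finset.univ with hT
  have hdisj : Disjoint ({0} : Finset ℕ) T := by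
    simp only [Finset.disjoint_left, Finset.mem_singleton]
    rintro a rfl ha
    rw [hT] at ha
    simp only [Finset.mem_image, Finset.mem_univ, true_and] at ha
    obtain ⟨i, hi⟩ := ha
    omega
  have h := hindep.indepFun_finset {0} T hdisj hmeas
  have h0 : (0 : ℕ) ∈ ({0} : Finset ℕ) := Finset.mem_singleton_self 0
  have hmemT : ∀ i : Fin n, 1 + (i : ℕ) ∈ T := by
    intro i; rw [hT]; exact Finset.mem_image_of_mem _ (Finset.mem_univ i)
  have := h.comp (φ := fun g : ↥({0} : Finset ℕ) → ℝ => g ⟨0, h0⟩)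
    (ψ := fun (g : ↥T → ℝ) (i : Fin n) => g ⟨1 + (i : ℕ), hmemT i⟩)
    (measurable_pi_apply _ : Measurable fun g : ↥({0} : Finset ℕ) → ℝ => g ⟨0, h0⟩)
    (measurable_pi_lambda _ fun i => measurable_pi_apply _)
  exact this

lemma prob_Esucc (ξ : ℕ → Ω → ℝ) (hmeas : ∀ n, Measurable (ξ n))
    (hindep : iIndepFun ξ ℙ)
    (hident : ∀ n, Measure.map (ξ n) ℙ = Measure.map (ξ 0) ℙ)
    (n : ℕ) (t : ℝ) (ht : 0 ≤ t) :
    ℙ (Eset ξ (n + 1) t)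
      = ∫⁻ a, Measure.pi (fun _ : Fin n => Measure.map (ξ 0) ℙ) (Aset n (t + a))
          ∂(Measure.map (ξ 0) ℙ) := by
  classical
  set ν := Measure.map (ξ 0) ℙ with hν
  set π := Measure.pi (fun _ : Fin n => ν) with hπ
  set V : Ω → Fin n → ℝ := fun ω i => ξ (1 + (i : ℕ)) ω with hV
  have hVmeas : Measurable V := measurable_pi_lambda _ fun i => hmeas _
  set B : Set (ℝ × (Fin n → ℝ)) :=
    {p | ∀ j ≤ n, -t ≤ p.1 + ∑ i ∈ Finset.range j, padf n p.2 i} with hB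
  have hBmeas : MeasurableSet B := by
    have : B = ⋂ j ∈ Set.Iic n,
        {p : ℝ × (Fin n → ℝ) | -t ≤ p.1 + ∑ i ∈ Finset.range j, padf n p.2 i} := by
      ext p; simp [hB, Set.mem_Iic]
    rw [this]
    refine MeasurableSet.biInter (to_countable _) fun j _ => ?_
    refine measurableSet_le measurable_const ?_
    refine Measurable.add measurable_fst ?_
    refine Finset.measurable_sum _ fun i _ => ?_
    unfold padf
    split
    · exact (measurable_pi_apply _).comp measurable_snd
    · exact measurable_const
  -- E (n+1) t equals preimage of B
  have hEB : Eset ξ (n + 1) t = (fun ω => (ξ 0 ω, V ω)) ⁻¹' B := by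
    ext ω
    simp only [Eset, Set.mem_setOf_eq, Set.mem_preimage, hB, hV]
    constructor
    · intro h j hj
      have := h (j + 1) (by omega)
      have hsum : Swalk ξ (j+1) ω
          = ξ 0 ω + ∑ i ∈ Finset.range j, padf n (fun i : Fin n => ξ (1 + (i : ℕ)) ω) i := by
        unfold Swalk
        rw [Finset.sum_range_succ']
        rw [add_comm]
        congr 1
        refine Finset.sum_congr rfl fun i hi => ?_
        have hin : i < n := lt_of_lt_of_le (Finset.mem_range.mp hi) hj
        simp [padf, hin, Nat.add_comm]
      rw [hsum] at this
      exact this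
    · intro h k hk
      match k with
      | 0 => simpa [Swalk] using neg_nonpos_of_nonneg ht
      | (j+1) =>
        have hj : j ≤ n := by omega
        have := h j hj
        have hsum : Swalk ξ (j+1) ω
            = ξ 0 ω + ∑ i ∈ Finset.range j, padf n (fun i : Fin n => ξ (1 + (i : ℕ)) ω) i := by
          unfold Swalk
          rw [Finset.sum_range_succ']
          rw [add_comm]
          congr 1
          refine Finset.sum_congr rfl fun i hi => ?_
          have hin : i < n := lt_of_lt_of_le (Finset.mem_range.mp hi) hj
          simp [padf, hin, Nat.add_comm]
        rw [hsum]
        exact this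
  -- joint law
  have hpair := indep_pair ξ hmeas hindep n
  have hmap : Measure.map (fun ω => (ξ 0 ω, V ω)) ℙ = ν.prod π := by
    rw [(indepFun_iff_map_prod_eq_prod_map_map ((hmeas 0).aemeasurable)
      hVmeas.aemeasurable).mp hpair]
    rw [hν, hπ, hV]
    congr 1
    exact map_block_eq_pi ξ hmeas hindep hident 1 n
  have hslice : ∀ a : ℝ, Prod.mk a ⁻¹' B = Aset n (t + a) := by
    intro a
    ext x
    simp only [Set.mem_preimage, hB, Set.mem_setOf_eq, Aset]
    refine forall_congr' fun j => imp_congr_right fun hj => ?_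
    constructor <;> intro h <;> linarith
  calc ℙ (Eset ξ (n+1) t) = ℙ ((fun ω => (ξ 0 ω, V ω)) ⁻¹' B) := by rw [hEB]
    _ = (ν.prod π) B := by
        rw [← hmap, Measure.map_apply (Measurable.prodMk (hmeas 0) hVmeas) hBmeas]
    _ = ∫⁻ a, π (Prod.mk a ⁻¹' B) ∂ν := Measure.prod_apply hBmeas
    _ = ∫⁻ a, π (Aset n (t + a)) ∂ν := by
        refine lintegral_congr fun a => by rw [hslice a]

lemma prob_Esucc' (ξ : ℕ → Ω → ℝ) (hmeas : ∀ n, Measurable (ξ n))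
    (hindep : iIndepFun ξ ℙ)
    (hident : ∀ n, Measure.map (ξ n) ℙ = Measure.map (ξ 0) ℙ)
    (n : ℕ) (t : ℝ) (ht : 0 ≤ t) :
    ℙ (Eset ξ (n + 1) t)
      = ∫⁻ a, ℙ (Eset ξ n (t + a)) ∂(Measure.map (ξ 0) ℙ) := by
  rw [prob_Esucc ξ hmeas hindep hident n t ht]
  refine lintegral_congr fun a => ?_
  rw [← prob_Eset_eq ξ hmeas hindep hident n (t + a)]
section basic

variable (ξ : ℕ → Ω → ℝ)

lemma Eset_mono_t (n : ℕ) : Monotone fun t => Eset ξ n t := by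
  intro t t' htt' ω hω j hj
  exact le_trans (neg_le_neg htt') (hω j hj)

lemma Cset_mono : Monotone fun t => Cset ξ t := by
  intro t t' htt' ω hω j
  exact le_trans (neg_le_neg htt') (hω j)

lemma Eset_anti (t : ℝ) : Antitone fun n => Eset ξ n t := by
  intro n n' hnn' ω hω j hj
  exact hω j (le_trans hj hnn')

lemma Cset_eq_iInter (t : ℝ) : Cset ξ t = ⋂ n, Eset ξ n t := by
  ext ω
  simp only [Cset, Set.mem_setOf_eq, Set.mem_iInter, Eset]
  exact ⟨fun h n j _ => h j, fun h j => h j j le_rfl⟩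

lemma Phin_nonneg (n : ℕ) (t : ℝ) : 0 ≤ Phin ξ n t := ENNReal.toReal_nonneg

lemma Phin_le_one (n : ℕ) (t : ℝ) : Phin ξ n t ≤ 1 := by
  have := prob_le_one (μ := (ℙ : Measure Ω)) (s := Eset ξ n t)
  unfold Phin
  exact ENNReal.toReal_le_of_le_ofReal zero_le_one (by simpa using this)

lemma Phi_nonneg (t : ℝ) : 0 ≤ Phi ξ t := ENNReal.toReal_nonneg

lemma Phi_le_one (t : ℝ) : Phi ξ t ≤ 1 := by
  have := prob_le_one (μ := (ℙ : Measure Ω)) (s := Cset ξ t)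
  unfold Phi
  exact ENNReal.toReal_le_of_le_ofReal zero_le_one (by simpa using this)

lemma Phin_mono (n : ℕ) : Monotone (Phin ξ n) := by
  intro t t' h
  unfold Phin
  exact ENNReal.toReal_mono (measure_ne_top _ _) (measure_mono (Eset_mono_t ξ n h))

lemma Phi_mono : Monotone (Phi ξ) := by
  intro t t' h
  unfold Phi
  exact ENNReal.toReal_mono (measure_ne_top _ _) (measure_mono (Cset_mono ξ h))

lemma Phin_measurable (n : ℕ) : Measurable (Phin ξ n) := (Phin_mono ξ n).measurable

lemma Phi_measurable : Measurable (Phi ξ) := (Phi_mono ξ).measurable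

lemma Phi_neg (t : ℝ) (ht : t < 0) : Phi ξ t = 0 := by
  have : Cset ξ t = ∅ := by
    ext ω
    simp only [Cset, Set.mem_setOf_eq, Set.mem_empty_iff_false, iff_false, not_forall]
    exact ⟨0, by simp [Swalk]; linarith⟩
  unfold Phi
  rw [this]
  simp

lemma Phin_tendsto_Phi (hmeas : ∀ n, Measurable (ξ n)) (t : ℝ) :
    Tendsto (fun n => Phin ξ n t) atTop (𝓝 (Phi ξ t)) := by
  have h1 : Tendsto (fun n => ℙ (Eset ξ n t)) atTop (𝓝 (ℙ (Cset ξ t))) := by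
    rw [Cset_eq_iInter]
    exact tendsto_measure_iInter_atTop
      (fun n => (measurableSet_Eset ξ hmeas n t).nullMeasurableSet)
      (Eset_anti ξ t) ⟨0, measure_ne_top _ _⟩
  exact (ENNReal.tendsto_toReal (measure_ne_top _ _)).comp h1

lemma Phi_le_Phin (hmeas : ∀ n, Measurable (ξ n)) (n : ℕ) (t : ℝ) :
    Phi ξ t ≤ Phin ξ n t := by
  unfold Phi Phin
  refine ENNReal.toReal_mono (measure_ne_top _ _) (measure_mono ?_)
  rw [Cset_eq_iInter]
  exact Set.iInter_subset _ n

end basic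

section recursion

variable (ξ : ℕ → Ω → ℝ) (hmeas : ∀ n, Measurable (ξ n))
  (hindep : iIndepFun ξ ℙ)
  (hident : ∀ n, Measure.map (ξ n) ℙ = Measure.map (ξ 0) ℙ)

include hmeas hindep hident

lemma Phin_succ (n : ℕ) (t : ℝ) (ht : 0 ≤ t) :
    Phin ξ (n + 1) t = ∫ ω, Phin ξ n (t + ξ 0 ω) ∂ℙ := by
  have hg : Monotone fun u => ℙ (Eset ξ n u) := fun u u' h =>
    measure_mono (Eset_mono_t ξ n h)
  have hgm : Measurable fun u => ℙ (Eset ξ n u) := hg.measurable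
  have h1 := prob_Esucc' ξ hmeas hindep hident n t ht
  have h2 : ∫ a, Phin ξ n (t + a) ∂(Measure.map (ξ 0) ℙ)
      = (∫⁻ a, ℙ (Eset ξ n (t + a)) ∂(Measure.map (ξ 0) ℙ)).toReal := by
    have h := integral_toReal (f := fun a => ℙ (Eset ξ n (t + a)))
      (μ := Measure.map (ξ 0) ℙ)
      ((hgm.comp (measurable_const_add t)).aemeasurable)
      (Eventually.of_forall fun a => measure_lt_top _ _)
    rw [← h]
    rfl
  have h3 : ∫ a, Phin ξ n (t + a) ∂(Measure.map (ξ 0) ℙ)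
      = ∫ ω, Phin ξ n (t + ξ 0 ω) ∂ℙ := by
    rw [integral_map (hmeas 0).aemeasurable]
    exact (((Phin_measurable ξ n).comp (measurable_const_add t)).aestronglyMeasurable)
  rw [← h3, h2, ← h1]
  rfl

lemma Phi_harmonic (t : ℝ) (ht : 0 ≤ t) :
    Phi ξ t = ∫ ω, Phi ξ (t + ξ 0 ω) ∂ℙ := by
  have hLHS : Tendsto (fun n => Phin ξ (n + 1) t) atTop (𝓝 (Phi ξ t)) :=
    (Phin_tendsto_Phi ξ hmeas t).comp (tendsto_add_atTop_nat 1)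
  have hRHS : Tendsto (fun n => ∫ ω, Phin ξ n (t + ξ 0 ω) ∂ℙ) atTop
      (𝓝 (∫ ω, Phi ξ (t + ξ 0 ω) ∂ℙ)) := by
    refine tendsto_integral_of_dominated_convergence (fun _ => (1 : ℝ)) ?_ ?_ ?_ ?_
    · exact fun n => (((Phin_measurable ξ n).comp
        ((hmeas 0).const_add t)).aestronglyMeasurable)
    · exact integrable_const 1
    · intro n
      refine Eventually.of_forall fun ω => ?_
      rw [Real.norm_eq_abs, abs_of_nonneg (Phin_nonneg ξ n _)]
      exact Phin_le_one ξ n _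
    · exact Eventually.of_forall fun ω => Phin_tendsto_Phi ξ hmeas _
  exact tendsto_nhds_unique (hLHS.congr
    (fun n => (Phin_succ ξ hmeas hindep hident n t ht))) hRHS

end recursion


section beta

variable (ξ : ℕ → Ω → ℝ)

noncomputable def beta : ℝ := (ℙ (Bset ξ)).toReal

lemma beta_nonneg : 0 ≤ beta ξ := ENNReal.toReal_nonneg

lemma Phi_le_beta (t : ℝ) : Phi ξ t ≤ beta ξ := by
  obtain ⟨m, hm⟩ := exists_nat_ge t
  have h1 : Cset ξ t ⊆ Bset ξ :=
    subset_trans (Cset_mono ξ hm) (Set.subset_iUnion (fun m : ℕ => Cset ξ (m : ℝ)) m)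
  exact ENNReal.toReal_mono (measure_ne_top _ _) (measure_mono h1)

lemma tendsto_Phi_nat (hmeas : ∀ n, Measurable (ξ n)) :
    Tendsto (fun m : ℕ => Phi ξ (m : ℝ)) atTop (𝓝 (beta ξ)) := by
  have h1 : Tendsto (fun m : ℕ => ℙ (Cset ξ (m : ℝ))) atTop (𝓝 (ℙ (Bset ξ))) := by
    refine tendsto_measure_iUnion_atTop ?_
    intro m m' h
    exact Cset_mono ξ (by exact_mod_cast h)
  exact (ENNReal.tendsto_toReal (measure_ne_top _ _)).comp h1

lemma tendsto_Phi_atTop (hmeas : ∀ n, Measurable (ξ n)) :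
    Tendsto (Phi ξ) atTop (𝓝 (beta ξ)) := by
  refine tendsto_order.2 ⟨?_, ?_⟩
  · intro b hb
    have := (tendsto_Phi_nat ξ hmeas).eventually_const_lt hb
    obtain ⟨m, hm⟩ := this.exists
    filter_upwards [eventually_ge_atTop (m : ℝ)] with t ht
    exact lt_of_lt_of_le hm (Phi_mono ξ ht)
  · intro b hb
    filter_upwards with t
    exact lt_of_le_of_lt (Phi_le_beta ξ t) hb

end beta

section Fint

variable (ξ : ℕ → Ω → ℝ)

noncomputable def Ff : ℝ → ℝ := fun y => ∫ t in (0:ℝ)..y, Phi ξ t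

lemma Phi_intervalIntegrable (a b : ℝ) : IntervalIntegrable (Phi ξ) volume a b := by
  constructor <;>
  · refine Integrable.mono' (g := fun _ => (1:ℝ))
      (integrableOn_const measure_Ioc_lt_top.ne)
      (Phi_measurable ξ).aestronglyMeasurable.restrict ?_
    filter_upwards with t
    rw [Real.norm_eq_abs, abs_of_nonneg (Phi_nonneg ξ t)]
    exact Phi_le_one ξ t

lemma Ff_sub (y z : ℝ) : Ff ξ z - Ff ξ y = ∫ t in y..z, Phi ξ t := by
  have := intervalIntegral.integral_add_adjacent_intervals
    (Phi_intervalIntegrable ξ 0 y) (Phi_intervalIntegrable ξ y z)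
  unfold Ff
  linarith

lemma Ff_mono : Monotone (Ff ξ) := by
  intro y z hyz
  have h := Ff_sub ξ y z
  have h2 : 0 ≤ ∫ t in y..z, Phi ξ t :=
    intervalIntegral.integral_nonneg hyz fun t _ => Phi_nonneg ξ t
  linarith

lemma Ff_measurable : Measurable (Ff ξ) := (Ff_mono ξ).measurable

lemma Ff_diff_abs_le (y z : ℝ) : |Ff ξ z - Ff ξ y| ≤ |z - y| := by
  rw [Ff_sub ξ y z]
  have := intervalIntegral.norm_integral_le_of_norm_le_const (C := 1)
    (f := Phi ξ) (a := y) (b := z) ?_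
  · rw [Real.norm_eq_abs] at this
    linarith
  · intro t _
    rw [Real.norm_eq_abs, abs_of_nonneg (Phi_nonneg ξ t)]
    exact Phi_le_one ξ t

lemma Ff_zero : Ff ξ 0 = 0 := intervalIntegral.integral_same

lemma Ff_abs_le (y : ℝ) : |Ff ξ y| ≤ |y| := by
  have := Ff_diff_abs_le ξ 0 y
  rw [Ff_zero] at this
  simpa using this

lemma Ff_nonneg (y : ℝ) : 0 ≤ Ff ξ y := by
  rcases le_or_gt 0 y with hy | hy
  · have := Ff_mono ξ hy
    rw [Ff_zero] at this
    exact this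
  · -- y < 0 : Ff y = 0 since Phi vanishes on negatives
    have h0 : Ff ξ y = -∫ t in y..(0:ℝ), Phi ξ t := by
      have := Ff_sub ξ y 0
      rw [Ff_zero] at this
      linarith
    have h1 : ∫ t in y..(0:ℝ), Phi ξ t = 0 := by
      rw [intervalIntegral.integral_of_le hy.le]
      refine setIntegral_eq_zero_of_ae_eq_zero ?_
      have hz : (volume : Measure ℝ) ({(0:ℝ)} : Set ℝ) = 0 := Real.volume_singleton
      have h3 : ∀ᵐ t ∂(volume : Measure ℝ), t ∉ ({(0:ℝ)} : Set ℝ) :=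
        measure_eq_zero_iff_ae_notMem.mp hz
      filter_upwards [h3] with t hne hmem
      have hne' : t ≠ 0 := by simpa using hne
      exact Phi_neg ξ t (lt_of_le_of_ne hmem.2 hne')
    rw [h0, h1]
    simp

end Fint

section key

variable (ξ : ℕ → Ω → ℝ) (hmeas : ∀ n, Measurable (ξ n))
  (hindep : iIndepFun ξ ℙ)
  (hident : ∀ n, Measure.map (ξ n) ℙ = Measure.map (ξ 0) ℙ)
  (hint : Integrable (ξ 0) ℙ)

include hmeas hindep hident hint

lemma key_identity (T : ℝ) (hT : 0 ≤ T) :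
    Ff ξ T = ∫ ω, (Ff ξ (T + ξ 0 ω) - Ff ξ (ξ 0 ω)) ∂ℙ := by
  haveI hfin : IsFiniteMeasure (volume.restrict (Ioc (0:ℝ) T)) := by
    constructor
    rw [Measure.restrict_apply_univ]
    exact measure_Ioc_lt_top
  have h1 : Ff ξ T = ∫ t in Ioc (0:ℝ) T, Phi ξ t := by
    unfold Ff
    rw [intervalIntegral.integral_of_le hT]
  have h2 : ∫ t in Ioc (0:ℝ) T, Phi ξ t
      = ∫ t in Ioc (0:ℝ) T, ∫ ω, Phi ξ (t + ξ 0 ω) ∂ℙ := by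
    refine setIntegral_congr_fun measurableSet_Ioc fun t ht => ?_
    exact Phi_harmonic ξ hmeas hindep hident t ht.1.le
  have hswap : ∫ t in Ioc (0:ℝ) T, ∫ ω, Phi ξ (t + ξ 0 ω) ∂ℙ
      = ∫ ω, (∫ t in Ioc (0:ℝ) T, Phi ξ (t + ξ 0 ω)) ∂ℙ := by
    refine integral_integral_swap ?_
    refine Integrable.mono' (g := fun _ => (1:ℝ)) (integrable_const 1) ?_ ?_
    · exact ((Phi_measurable ξ).comp
        (measurable_fst.add ((hmeas 0).comp measurable_snd))).aestronglyMeasurable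
    · filter_upwards with p
      rw [Function.uncurry_def]
      rw [Real.norm_eq_abs, abs_of_nonneg (Phi_nonneg ξ _)]
      exact Phi_le_one ξ _
  have hinner : ∀ ω, ∫ t in Ioc (0:ℝ) T, Phi ξ (t + ξ 0 ω)
      = Ff ξ (T + ξ 0 ω) - Ff ξ (ξ 0 ω) := by
    intro ω
    have ha : ∫ t in Ioc (0:ℝ) T, Phi ξ (t + ξ 0 ω)
        = ∫ t in (0:ℝ)..T, Phi ξ (t + ξ 0 ω) := by
      rw [intervalIntegral.integral_of_le hT]
    rw [ha]
    rw [intervalIntegral.integral_comp_add_right (fun u => Phi ξ u) (ξ 0 ω)]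
    rw [zero_add]
    rw [← Ff_sub ξ (ξ 0 ω) (T + ξ 0 ω)]
  rw [h1, h2, hswap]
  refine integral_congr_ae (Eventually.of_forall fun ω => hinner ω)

lemma Ff_xi_integrable : Integrable (fun ω => Ff ξ (ξ 0 ω)) ℙ := by
  refine Integrable.mono' hint.abs
    ((Ff_measurable ξ).comp (hmeas 0)).aestronglyMeasurable ?_
  filter_upwards with ω
  rw [Real.norm_eq_abs]
  exact Ff_abs_le ξ (ξ 0 ω)

lemma Ff_T_xi_integrable (T : ℝ) : Integrable (fun ω => Ff ξ (T + ξ 0 ω)) ℙ := by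
  refine Integrable.mono' ((integrable_const |T|).add hint.abs)
    ((Ff_measurable ξ).comp ((hmeas 0).const_add T)).aestronglyMeasurable ?_
  filter_upwards with ω
  rw [Real.norm_eq_abs]
  calc |Ff ξ (T + ξ 0 ω)| ≤ |T + ξ 0 ω| := Ff_abs_le ξ _
    _ ≤ |T| + |ξ 0 ω| := abs_add_le _ _

lemma key_identity2 (T : ℝ) (hT : 0 ≤ T) :
    ∫ ω, (Ff ξ (T + ξ 0 ω) - Ff ξ T) ∂ℙ = ∫ ω, Ff ξ (ξ 0 ω) ∂ℙ := by
  have h1 := key_identity ξ hmeas hindep hident hint T hT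
  have h2 : ∫ ω, (Ff ξ (T + ξ 0 ω) - Ff ξ (ξ 0 ω)) ∂ℙ
      = (∫ ω, Ff ξ (T + ξ 0 ω) ∂ℙ) - ∫ ω, Ff ξ (ξ 0 ω) ∂ℙ :=
    integral_sub (Ff_T_xi_integrable ξ hmeas hindep hident hint T)
      (Ff_xi_integrable ξ hmeas hindep hident hint)
  have h3 : ∫ ω, (Ff ξ (T + ξ 0 ω) - Ff ξ T) ∂ℙ
      = (∫ ω, Ff ξ (T + ξ 0 ω) ∂ℙ) - ∫ ω, (Ff ξ T) ∂ℙ :=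
    integral_sub (Ff_T_xi_integrable ξ hmeas hindep hident hint T) (integrable_const _)
  rw [h3, integral_const]
  simp only [measureReal_def, measure_univ, ENNReal.toReal_one, one_smul]
  rw [h2] at h1
  linarith

lemma c_eq_beta_mul_mean :
    ∫ ω, Ff ξ (ξ 0 ω) ∂ℙ = beta ξ * ∫ ω, ξ 0 ω ∂ℙ := by
  set β := beta ξ with hβ
  have hβ01 : 0 ≤ β := beta_nonneg ξ
  -- pointwise limit
  have hptwise : ∀ ω, Tendsto (fun m : ℕ => Ff ξ ((m:ℝ) + ξ 0 ω) - Ff ξ (m:ℝ))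
      atTop (𝓝 (β * ξ 0 ω)) := by
    intro ω
    set x := ξ 0 ω with hx
    have hbound : ∀ m : ℕ, |Ff ξ ((m:ℝ) + x) - Ff ξ (m:ℝ) - β * x|
        ≤ (β - Phi ξ ((m:ℝ) - |x|)) * |x| := by
      intro m
      have h1 : Ff ξ ((m:ℝ) + x) - Ff ξ (m:ℝ) = ∫ t in (m:ℝ)..((m:ℝ)+x), Phi ξ t :=
        Ff_sub ξ (m:ℝ) ((m:ℝ)+x)
      have h2 : ∫ t in (m:ℝ)..((m:ℝ)+x), (β : ℝ) = β * x := by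
        rw [intervalIntegral.integral_const, smul_eq_mul]
        ring
      have h3 : Ff ξ ((m:ℝ) + x) - Ff ξ (m:ℝ) - β * x
          = ∫ t in (m:ℝ)..((m:ℝ)+x), (Phi ξ t - β) := by
        rw [intervalIntegral.integral_sub (Phi_intervalIntegrable ξ _ _)
          intervalIntegrable_const, h1, h2]
      rw [h3]
      have h4 := intervalIntegral.norm_integral_le_of_norm_le_const
        (C := β - Phi ξ ((m:ℝ) - |x|)) (f := fun t => Phi ξ t - β)
        (a := (m:ℝ)) (b := (m:ℝ)+x) ?_
      · rw [Real.norm_eq_abs] at h4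
        have h5 : (m:ℝ) + x - (m:ℝ) = x := by ring
        rw [h5] at h4
        exact h4
      · intro t ht
        rw [Set.mem_uIoc] at ht
        have htlb : (m:ℝ) - |x| ≤ t := by
          rcases ht with ⟨h5, _⟩ | ⟨h5, _⟩
          · have := abs_nonneg x; linarith
          · have : -|x| ≤ x := neg_abs_le x
            linarith
        have h6 : Phi ξ ((m:ℝ) - |x|) ≤ Phi ξ t := Phi_mono ξ htlb
        have h7 : Phi ξ t ≤ β := Phi_le_beta ξ t
        have h8 : ‖(fun t => Phi ξ t - β) t‖ = β - Phi ξ t := by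
          simp only []
          rw [Real.norm_eq_abs, abs_of_nonpos (by linarith : Phi ξ t - β ≤ 0)]
          ring
        rw [h8]
        linarith
    have hub : Tendsto (fun m : ℕ => (β - Phi ξ ((m:ℝ) - |x|)) * |x|) atTop (𝓝 0) := by
      have h8 : Tendsto (fun m : ℕ => ((m:ℝ) - |x|)) atTop atTop :=
        tendsto_atTop_add_const_right _ _ tendsto_natCast_atTop_atTop
      have h9 : Tendsto (fun m : ℕ => Phi ξ ((m:ℝ) - |x|)) atTop (𝓝 β) :=
        (tendsto_Phi_atTop ξ hmeas).comp h8
      have h10 := (tendsto_const_nhds (x := β) (f := atTop (α := ℕ))).sub h9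
      rw [sub_self] at h10
      have h11 := h10.mul_const |x|
      rw [zero_mul] at h11
      exact h11
    have h12 := squeeze_zero_norm
      (f := fun m : ℕ => Ff ξ ((m:ℝ) + x) - Ff ξ (m:ℝ) - β * x) hbound hub
    have h13 := h12.add_const (β * x)
    rw [zero_add] at h13
    refine h13.congr fun m => by ring
  -- dominated convergence
  have hconv : Tendsto (fun m : ℕ => ∫ ω, (Ff ξ ((m:ℝ) + ξ 0 ω) - Ff ξ (m:ℝ)) ∂ℙ)
      atTop (𝓝 (∫ ω, β * ξ 0 ω ∂ℙ)) := by
    refine tendsto_integral_of_dominated_convergence (fun ω => |ξ 0 ω|) ?_ hint.abs ?_ ?_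
    · intro m
      exact (((Ff_measurable ξ).comp ((hmeas 0).const_add (m:ℝ))).sub
        measurable_const).aestronglyMeasurable
    · intro m
      filter_upwards with ω
      rw [Real.norm_eq_abs]
      have := Ff_diff_abs_le ξ (m:ℝ) ((m:ℝ) + ξ 0 ω)
      simpa using this
    · exact Eventually.of_forall hptwise
  have hconst : ∀ m : ℕ, ∫ ω, (Ff ξ ((m:ℝ) + ξ 0 ω) - Ff ξ (m:ℝ)) ∂ℙ
      = ∫ ω, Ff ξ (ξ 0 ω) ∂ℙ :=
    fun m => key_identity2 ξ hmeas hindep hident hint (m:ℝ) (Nat.cast_nonneg m)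
  have h14 : Tendsto (fun _ : ℕ => ∫ ω, Ff ξ (ξ 0 ω) ∂ℙ) atTop (𝓝 (∫ ω, β * ξ 0 ω ∂ℙ)) :=
    hconv.congr hconst
  have h15 := tendsto_nhds_unique h14 tendsto_const_nhds
  rw [← h15, integral_const_mul]

end key

section endgame

variable (ξ : ℕ → Ω → ℝ) (hmeas : ∀ n, Measurable (ξ n))
  (hindep : iIndepFun ξ ℙ)
  (hident : ∀ n, Measure.map (ξ n) ℙ = Measure.map (ξ 0) ℙ)
  (hint : Integrable (ξ 0) ℙ)
  (hmean : ∫ ω, ξ 0 ω ≤ 0)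
  (hnondeg : 0 < ℙ {ω | ξ 0 ω ≠ 0})

include hmeas hindep hident hint hmean hnondeg

theorem prob_Bset_zero : ℙ (Bset ξ) = 0 := by
  by_contra hB0
  have hβpos : 0 < beta ξ := ENNReal.toReal_pos hB0 (measure_ne_top _ _)
  set μr := ∫ ω, ξ 0 ω ∂ℙ with hμr
  set c := ∫ ω, Ff ξ (ξ 0 ω) ∂ℙ with hcdef
  have hc : c = beta ξ * μr := c_eq_beta_mul_mean ξ hmeas hindep hident hint
  have hc0 : 0 ≤ c := integral_nonneg fun ω => Ff_nonneg ξ (ξ 0 ω)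
  have hμr0 : μr = 0 := by nlinarith
  have hczero : c = 0 := by rw [hc, hμr0, mul_zero]
  -- a.e. ξ 0 ≤ 0 leads to contradiction with nondegeneracy
  have hfinal : (∀ᵐ ω ∂(ℙ : Measure Ω), ξ 0 ω ≤ 0) → False := by
    intro hae
    have h1 : ∀ᵐ ω ∂(ℙ : Measure Ω), -(ξ 0 ω) = 0 := by
      have hnn : 0 ≤ᵐ[(ℙ : Measure Ω)] fun ω => -(ξ 0 ω) := by
        filter_upwards [hae] with ω h
        simp only [Pi.zero_apply]
        linarith
      have hintneg : Integrable (fun ω => -(ξ 0 ω)) ℙ := hint.neg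
      have hzero : ∫ ω, -(ξ 0 ω) ∂ℙ = 0 := by
        rw [integral_neg]; rw [← hμr] at *; linarith [hμr0]
      have := (integral_eq_zero_iff_of_nonneg_ae hnn hintneg).mp hzero
      filter_upwards [this] with ω h
      simpa using h
    have h2 : ∀ᵐ ω ∂(ℙ : Measure Ω), ξ 0 ω = 0 := by
      filter_upwards [h1] with ω h; linarith
    have h3 : ℙ {ω | ξ 0 ω ≠ 0} = 0 := by
      have : {ω | ξ 0 ω ≠ 0} ⊆ {ω | ¬ (ξ 0 ω = 0)} := fun ω h => h
      rw [ae_iff] at h2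
      exact h2
    rw [h3] at hnondeg
    exact lt_irrefl _ hnondeg
  by_cases hA : ∃ ε, 0 < ε ∧ 0 < ℙ {ω | ε ≤ ξ 0 ω}
  · obtain ⟨ε, hε, hq⟩ := hA
    set A := {ω | ε ≤ ξ 0 ω} with hAdef
    have hAmeas : MeasurableSet A := measurableSet_le measurable_const (hmeas 0)
    have hFfint : Integrable (fun ω => Ff ξ (ξ 0 ω)) ℙ :=
      Ff_xi_integrable ξ hmeas hindep hident hint
    -- Step 1 : Ff ξ ε = 0
    have hFfeps : Ff ξ ε = 0 := by
      have h4 : ∫ ω in A, Ff ξ (ξ 0 ω) ∂ℙ ≤ c :=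
        setIntegral_le_integral hFfint
          (Eventually.of_forall fun ω => Ff_nonneg ξ (ξ 0 ω))
      have h5 : ∫ ω in A, (Ff ξ ε) ∂ℙ ≤ ∫ ω in A, Ff ξ (ξ 0 ω) ∂ℙ := by
        refine setIntegral_mono_on (integrableOn_const (measure_lt_top _ _).ne)
          hFfint.integrableOn hAmeas fun ω hω => ?_
        exact Ff_mono ξ hω
      have h6 : ∫ ω in A, (Ff ξ ε) ∂ℙ = (ℙ A).toReal * Ff ξ ε := by
        rw [setIntegral_const, smul_eq_mul, measureReal_def]
      have h7 : 0 < (ℙ A).toReal := ENNReal.toReal_pos hq.ne' (measure_ne_top _ _)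
      have h8 : (ℙ A).toReal * Ff ξ ε ≤ 0 := by
        rw [← h6]; rw [hczero] at h4; linarith
      have h9 := Ff_nonneg ξ ε
      nlinarith
    -- Step 2 : Phi vanishes on [0, ε)
    have hPhival : ∀ t, 0 ≤ t → t < ε → Phi ξ t = 0 := by
      intro t ht0 htε
      have h10 : Ff ξ ε - Ff ξ t = ∫ s in t..ε, Phi ξ s := Ff_sub ξ t ε
      have h11 : ∫ s in t..ε, (Phi ξ t) ≤ ∫ s in t..ε, Phi ξ s := by
        refine intervalIntegral.integral_mono_on htε.le intervalIntegrable_const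
          (Phi_intervalIntegrable ξ t ε) fun s hs => ?_
        exact Phi_mono ξ hs.1
      have h12 : ∫ s in t..ε, (Phi ξ t) = (ε - t) * Phi ξ t := by
        rw [intervalIntegral.integral_const, smul_eq_mul]
      have h13 : Ff ξ t ≥ 0 := Ff_nonneg ξ t
      have h14 : Ff ξ ε = 0 := hFfeps
      have h15 := Phi_nonneg ξ t
      nlinarith
    -- Step 3 : the zero set and its sup
    set Z := {t : ℝ | 0 ≤ t ∧ Phi ξ t = 0} with hZdef
    have hZhalf : ε/2 ∈ Z := ⟨by linarith, hPhival (ε/2) (by linarith) (by linarith)⟩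
    have hZne : Z.Nonempty := ⟨ε/2, hZhalf⟩
    obtain ⟨m, hm⟩ : ∃ m : ℕ, 0 < Phi ξ (m : ℝ) :=
      ((tendsto_Phi_nat ξ hmeas).eventually_const_lt hβpos).exists
    have hZbdd : BddAbove Z := by
      refine ⟨(m : ℝ), fun z hz => ?_⟩
      by_contra hzm
      push_neg at hzm
      have h16 := Phi_mono ξ hzm.le
      rw [hz.2] at h16
      linarith
    set tstar := sSup Z with htstardef
    have htstar_ge : ε/2 ≤ tstar := le_csSup hZbdd hZhalf
    have htstar_pos : 0 < tstar := by linarith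
    have hzero_lt : ∀ t, 0 ≤ t → t < tstar → Phi ξ t = 0 := by
      intro t ht0 htlt
      obtain ⟨z, hzZ, hz⟩ := exists_lt_of_lt_csSup hZne htlt
      have h17 := Phi_mono ξ hz.le
      rw [hzZ.2] at h17
      linarith [Phi_nonneg ξ t]
    have hgt : ∀ u, tstar < u → 0 < Phi ξ u := by
      intro u hu
      rcases (Phi_nonneg ξ u).lt_or_eq with h | h
      · exact h
      · exfalso
        have huZ : u ∈ Z := ⟨by linarith, h.symm⟩
        have := le_csSup hZbdd huZ
        linarith
    -- Step 4
    have hstep4 : ∀ n : ℕ, ∀ᵐ ω ∂(ℙ : Measure Ω), ξ 0 ω ≤ tstar / ((n:ℝ)+2) := by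
      intro n
      set t := tstar - tstar/((n:ℝ)+2) with htdef
      have hn2 : (0:ℝ) < (n:ℝ)+2 := by positivity
      have hfrac_pos : 0 < tstar/((n:ℝ)+2) := by positivity
      have hfrac_le : tstar/((n:ℝ)+2) ≤ tstar := by
        rw [div_le_iff₀ hn2]; nlinarith
      have ht0 : 0 ≤ t := by rw [htdef]; linarith
      have htlt : t < tstar := by rw [htdef]; linarith
      have hPhit : Phi ξ t = 0 := hzero_lt t ht0 htlt
      have hharm := Phi_harmonic ξ hmeas hindep hident t ht0
      rw [hPhit] at hharm
      have hintegrable : Integrable (fun ω => Phi ξ (t + ξ 0 ω)) ℙ := by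
        refine Integrable.mono' (integrable_const 1)
          (((Phi_measurable ξ).comp ((hmeas 0).const_add t)).aestronglyMeasurable) ?_
        filter_upwards with ω
        rw [Real.norm_eq_abs, abs_of_nonneg (Phi_nonneg _ _)]
        exact Phi_le_one _ _
      have hnn : 0 ≤ᵐ[(ℙ : Measure Ω)] fun ω => Phi ξ (t + ξ 0 ω) :=
        Eventually.of_forall fun ω => Phi_nonneg _ _
      have hzero := (integral_eq_zero_iff_of_nonneg_ae hnn hintegrable).mp hharm.symm
      filter_upwards [hzero] with ω hω
      have hω' : Phi ξ (t + ξ 0 ω) = 0 := hω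
      by_contra hcon
      push_neg at hcon
      have h18 : tstar < t + ξ 0 ω := by rw [htdef]; linarith
      have h19 := hgt _ h18
      rw [hω'] at h19
      exact lt_irrefl _ h19
    have hae : ∀ᵐ ω ∂(ℙ : Measure Ω), ∀ n : ℕ, ξ 0 ω ≤ tstar/((n:ℝ)+2) :=
      ae_all_iff.mpr hstep4
    have hlim : Tendsto (fun n : ℕ => tstar/((n:ℝ)+2)) atTop (𝓝 0) := by
      apply Tendsto.div_atTop tendsto_const_nhds
      exact tendsto_atTop_add_const_right _ 2 tendsto_natCast_atTop_atTop
    have hle0 : ∀ᵐ ω ∂(ℙ : Measure Ω), ξ 0 ω ≤ 0 := by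
      filter_upwards [hae] with ω hω
      exact ge_of_tendsto hlim (Eventually.of_forall hω)
    have hAzero : ℙ A = 0 := by
      have hsub : A ⊆ {ω | ¬ ξ 0 ω ≤ 0} := by
        intro ω hω
        simp only [Set.mem_setOf_eq, not_le]
        have : ε ≤ ξ 0 ω := hω
        linarith
      refine measure_mono_null hsub ?_
      rw [ae_iff] at hle0
      exact hle0
    rw [hAzero] at hq
    exact lt_irrefl _ hq
  · -- case B : no positive mass above any positive level
    push_neg at hA
    have hle0 : ∀ᵐ ω ∂(ℙ : Measure Ω), ξ 0 ω ≤ 0 := by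
      have hn : ∀ n : ℕ, ℙ {ω | 1/((n:ℝ)+1) ≤ ξ 0 ω} = 0 := by
        intro n
        have h := hA (1/((n:ℝ)+1)) (by positivity)
        exact le_antisymm h zero_le
      have hunion : {ω | 0 < ξ 0 ω} ⊆ ⋃ n : ℕ, {ω | 1/((n:ℝ)+1) ≤ ξ 0 ω} := by
        intro ω hω
        obtain ⟨n, hn'⟩ := exists_nat_one_div_lt (show (0:ℝ) < ξ 0 ω from hω)
        exact Set.mem_iUnion.mpr ⟨n, hn'.le⟩
      have h0 : ℙ {ω | 0 < ξ 0 ω} = 0 := by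
        refine measure_mono_null hunion ?_
        rw [measure_iUnion_null_iff]
        exact fun n => hn n
      rw [ae_iff]
      convert h0 using 2
      ext ω
      simp [not_le]
    exact hfinal hle0

end endgame

end Stmt12Aux

open Stmt12Aux in
theorem stmt_12 {Ω : Type*} [MeasureSpace Ω] [IsProbabilityMeasure (ℙ : Measure Ω)]
    (ξ : ℕ → Ω → ℝ) (hmeas : ∀ n, Measurable (ξ n))
    (hindep : iIndepFun ξ ℙ)
    (hident : ∀ n, Measure.map (ξ n) ℙ = Measure.map (ξ 0) ℙ)
    (hint : Integrable (ξ 0) ℙ)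
    (hmean : ∫ ω, ξ 0 ω ≤ 0)
    (hnondeg : 0 < ℙ {ω | ξ 0 ω ≠ 0}) :
    ∀ᵐ ω ∂(ℙ : Measure Ω),
      ∀ M : ℝ, ∃ᶠ n in atTop, (∑ i ∈ Finset.range n, ξ i ω) < -M := by
  have hB := prob_Bset_zero ξ hmeas hindep hident hint hmean hnondeg
  have hae : ∀ᵐ ω ∂(ℙ : Measure Ω), ω ∉ Bset ξ := by
    rw [ae_iff]
    simpa using hB
  filter_upwards [hae] with ω hω M
  have hkey : ∀ m : ℕ, ∃ j, Swalk ξ j ω < -(m:ℝ) := by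
    intro m
    by_contra hcon
    push_neg at hcon
    exact hω (Set.mem_iUnion.mpr ⟨m, fun j => hcon j⟩)
  rw [frequently_atTop]
  intro N
  have hne : ((Finset.range (N+1)).image fun j => -Swalk ξ j ω).Nonempty :=
    Finset.Nonempty.image ⟨0, Finset.mem_range.mpr (Nat.succ_pos N)⟩ _
  set b := ((Finset.range (N+1)).image fun j => -Swalk ξ j ω).max' hne with hbdef
  obtain ⟨m, hm⟩ := exists_nat_gt (max M b)
  obtain ⟨j, hj⟩ := hkey m
  have hMm : M < (m:ℝ) := lt_of_le_of_lt (le_max_left _ _) hm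
  have hbm : b < (m:ℝ) := lt_of_le_of_lt (le_max_right _ _) hm
  refine ⟨j, ?_, ?_⟩
  · by_contra hjN
    push_neg at hjN
    have hmem : -Swalk ξ j ω ∈ (Finset.range (N+1)).image fun j => -Swalk ξ j ω :=
      Finset.mem_image_of_mem _ (Finset.mem_range.mpr (by omega))
    have hle := Finset.le_max' _ _ hmem
    rw [← hbdef] at hle
    linarith
  · show Swalk ξ j ω < -M
    linarith
end

section
/- Let γ > 0, let g : ℝ → ℝ be bounded and continuous, and let f : ℝ → ℝ be a bounded C² function with f''(x) - γ f'(x) = -g(x) for all x. Then f'(x) = ∫₀^∞ g(u + x) e^{-γu} du for all x ∈ ℝ; i.e., in the general solution f'(x) = ∫₀^∞ g(u+x) e^{-γu} du + C e^{γx} of this first-order linear ODE for f', boundedness of f forces the constant C to be zero. -/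
open Filter Set MeasureTheory

theorem stmt_19 (γ : ℝ) (hγ : 0 < γ) (g f : ℝ → ℝ)
    (hg_cont : Continuous g) (hg_bdd : ∃ C, ∀ x, |g x| ≤ C)
    (hf_smooth : ContDiff ℝ 2 f) (hf_bdd : ∃ C, ∀ x, |f x| ≤ C)
    (hode : ∀ x, deriv (deriv f) x - γ * deriv f x = -g x) :
    ∀ x : ℝ, deriv f x = ∫ u in Set.Ioi (0:ℝ), g (u + x) * Real.exp (-γ * u) := by
  obtain ⟨Cg, hCg⟩ := hg_bdd
  obtain ⟨Cf, hCf⟩ := hf_bdd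
  have hCf0 : 0 ≤ Cf := le_trans (abs_nonneg _) (hCf 0)
  set ψ : ℝ → ℝ := fun t => g t * Real.exp (-γ * t) with hψ
  have hψ_cont : Continuous ψ :=
    hg_cont.mul (Real.continuous_exp.comp (continuous_const.mul continuous_id))
  -- f is differentiable, deriv f is differentiable
  have hf2 : ContDiff ℝ (1+1) f := by norm_num at hf_smooth ⊢; exact hf_smooth
  have hfd : Differentiable ℝ f := hf_smooth.differentiable (by norm_num)
  have hd1 : ContDiff ℝ 1 (deriv f) := (contDiff_succ_iff_deriv.mp hf2).2.2
  have hdd : Differentiable ℝ (deriv f) := hd1.differentiable one_ne_zero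
  have hh : ∀ x, HasDerivAt (deriv f) (γ * deriv f x - g x) x := by
    intro x
    have hda := (hdd x).hasDerivAt
    have e : deriv (deriv f) x = γ * deriv f x - g x := by
      have := hode x; linarith
    rwa [e] at hda
  -- F and its derivative
  set F : ℝ → ℝ := fun x => Real.exp (-γ * x) * deriv f x with hF
  have hF' : ∀ x, HasDerivAt F (-ψ x) x := by
    intro x
    have h1 : HasDerivAt (fun y : ℝ => -γ * y) (-γ) x := by
      simpa using (hasDerivAt_id x).const_mul (-γ)
    have h2 : HasDerivAt (fun y : ℝ => Real.exp (-γ * y))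
        (Real.exp (-γ * x) * (-γ)) x := h1.exp
    have h3 := h2.mul (hh x)
    refine h3.congr_deriv ?_
    simp only [hψ]
    ring
  have hderiv_eq : ∀ T : ℝ, deriv f T = Real.exp (γ * T) * F T := by
    intro T
    simp only [hF]
    rw [← mul_assoc, ← Real.exp_add]
    ring_nf
    simp
  -- integrability of ψ on Ioi a
  have hψ_int : ∀ a : ℝ, IntegrableOn ψ (Ioi a) := by
    intro a
    have hint : IntegrableOn (fun t => Cg * Real.exp (-γ * t)) (Ioi a) :=
      (exp_neg_integrableOn_Ioi a hγ).const_mul Cg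
    apply hint.mono' (hψ_cont.aestronglyMeasurable.restrict)
    filter_upwards with t
    have habs : |g t * Real.exp (-γ * t)| = |g t| * Real.exp (-γ * t) := by
      rw [abs_mul, abs_of_pos (Real.exp_pos _)]
    rw [Real.norm_eq_abs]
    simp only [hψ]
    rw [habs]
    exact mul_le_mul_of_nonneg_right (hCg t) (Real.exp_pos _).le
  intro x
  -- FTC : F T = F x - ∫ t in x..T, ψ t
  have hFTC : ∀ T : ℝ, F T = F x - ∫ t in x..T, ψ t := by
    intro T
    have hI := intervalIntegral.integral_eq_sub_of_hasDerivAt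
      (f := F) (f' := fun t => -ψ t) (a := x) (b := T)
      (fun t _ => hF' t) (hψ_cont.neg.intervalIntegrable x T)
    rw [intervalIntegral.integral_neg] at hI
    linarith
  -- F tends to L := F x - ∫_{Ioi x} ψ
  set L : ℝ := F x - ∫ t in Ioi x, ψ t with hL
  have hFtend : Tendsto F atTop (nhds L) := by
    have h1 : Tendsto (fun T => ∫ t in x..T, ψ t) atTop (nhds (∫ t in Ioi x, ψ t)) :=
      intervalIntegral_tendsto_integral_Ioi x (hψ_int x) tendsto_id
    exact (tendsto_const_nhds.sub h1).congr fun T => (hFTC T).symm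
  -- L = 0
  have hL0 : L = 0 := by
    by_contra hLne
    have habs : 0 < |L| := abs_pos.mpr hLne
    have hev : ∀ᶠ T in atTop, |F T - L| < |L| / 2 := by
      have hT := Metric.tendsto_nhds.mp hFtend (|L| / 2) (by linarith)
      simpa [Real.dist_eq] using hT
    obtain ⟨T0, hT0⟩ := eventually_atTop.mp hev
    -- lower bound on |deriv f| for large T
    have hlow : ∀ T ≥ T0, |L| / 2 * Real.exp (γ * T) ≤ |deriv f T| := by
      intro T hT
      have h1 : |L| / 2 ≤ |F T| := by
        have h2 := hT0 T hT
        have h3 : |L| - |F T| ≤ |F T - L| := by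
          rw [abs_sub_comm (F T) L]
          exact abs_sub_abs_le_abs_sub L (F T)
        linarith
      rw [hderiv_eq T, abs_mul, abs_of_pos (Real.exp_pos _), mul_comm]
      exact mul_le_mul_of_nonneg_left h1 (Real.exp_pos _).le
    -- choose large T
    have hexp : Tendsto (fun T : ℝ => |L| / 2 * Real.exp (γ * T)) atTop atTop := by
      apply Tendsto.const_mul_atTop (by linarith)
      exact Real.tendsto_exp_atTop.comp (tendsto_id.const_mul_atTop hγ)
    obtain ⟨T1, hT1⟩ := eventually_atTop.mp (hexp.eventually_gt_atTop (2 * Cf))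
    set T := max T0 T1 with hTdef
    have hT0' : T0 ≤ T := le_max_left _ _
    have hT1' : |L| / 2 * Real.exp (γ * T) > 2 * Cf := hT1 T (le_max_right _ _)
    -- MVT on [T, T+1]
    obtain ⟨c, hc, hceq⟩ := exists_hasDerivAt_eq_slope f (deriv f)
      (by linarith : T < T + 1) (hfd.continuous.continuousOn)
      (fun y _ => (hfd y).hasDerivAt)
    have hcb : |deriv f c| ≤ 2 * Cf := by
      rw [hceq]
      have : (f (T+1) - f T) / (T + 1 - T) = f (T+1) - f T := by ring_nf
      rw [this]
      calc |f (T+1) - f T| ≤ |f (T+1)| + |f T| := abs_sub _ _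
        _ ≤ Cf + Cf := add_le_add (hCf _) (hCf _)
        _ = 2 * Cf := by ring
    have hcl : |L| / 2 * Real.exp (γ * c) ≤ |deriv f c| :=
      hlow c (le_trans hT0' hc.1.le)
    have hmono : Real.exp (γ * T) ≤ Real.exp (γ * c) :=
      Real.exp_le_exp.mpr (mul_le_mul_of_nonneg_left hc.1.le hγ.le)
    have : |L| / 2 * Real.exp (γ * T) ≤ |L| / 2 * Real.exp (γ * c) :=
      mul_le_mul_of_nonneg_left hmono (by linarith)
    linarith
  -- conclude
  have hFx : F x = ∫ t in Ioi x, ψ t := by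
    have := hL0
    rw [hL] at this
    linarith
  rw [hderiv_eq x, hFx]
  -- change of variables : ∫ u in Ioi 0, g (u+x) e^{-γ u} = e^{γ x} ∫ t in Ioi x, ψ t
  have hshift : (∫ u in Ioi (0:ℝ), ψ (u + x)) = ∫ t in Ioi x, ψ t := by
    rw [← integral_indicator measurableSet_Ioi, ← integral_indicator measurableSet_Ioi]
    rw [← integral_add_right_eq_self ((Ioi x).indicator ψ) x]
    congr 1
    ext u
    by_cases hu : u ∈ Ioi (0:ℝ)
    · rw [indicator_of_mem hu, indicator_of_mem (by simp at hu ⊢; linarith)]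
    · rw [indicator_of_notMem hu, indicator_of_notMem (by simp at hu ⊢; linarith)]
  calc Real.exp (γ * x) * ∫ t in Ioi x, ψ t
      = Real.exp (γ * x) * ∫ u in Ioi (0:ℝ), ψ (u + x) := by rw [hshift]
    _ = ∫ u in Ioi (0:ℝ), Real.exp (γ * x) * ψ (u + x) := by
        rw [integral_const_mul]
    _ = ∫ u in Ioi (0:ℝ), g (u + x) * Real.exp (-γ * u) := by
        congr 1; ext u
        simp only [hψ]
        rw [← mul_assoc, mul_comm (Real.exp (γ*x)) (g (u+x)), mul_assoc, ← Real.exp_add]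
        ring_nf
end
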